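/- Let t ≥ 1 be an integer and q = 3^t. The numerical semigroup generated by {2q/3, q, q+1} has exactly q(q−1)/6 gaps; that is, the complement in ℕ of the additive submonoid of ℕ generated by 2q/3, q and q+1 is a finite set with exactly q(q−1)/6 elements. -/

import Mathlib

private lemma closure_triple (x y z : ℕ) (n : ℕ) :
    n ∈ AddSubmonoid.closure ({x, y, z} : Set ℕ) ↔
      ∃ a b c, n = x * a + y * b + z * c := by
  constructor
  · intro h
    induction h using AddSubmonoid.closure_induction with
    | mem w hw =>
      rcases hw with rfl | rfl | rfl
      · exact ⟨1, 0, 0, by ring⟩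
      · exact ⟨0, 1, 0, by ring⟩
      · exact ⟨0, 0, 1, by ring⟩
    | zero => exact ⟨0, 0, 0, by ring⟩
    | add u v hu hv ihu ihv =>
      obtain ⟨a, b, c, rfl⟩ := ihu
      obtain ⟨a', b', c', rfl⟩ := ihv
      exact ⟨a + a', b + b', c + c', by ring⟩
  · rintro ⟨a, b, c, rfl⟩
    have hx : x ∈ AddSubmonoid.closure ({x, y, z} : Set ℕ) :=
      AddSubmonoid.subset_closure (by simp)
    have hy : y ∈ AddSubmonoid.closure ({x, y, z} : Set ℕ) :=
      AddSubmonoid.subset_closure (by simp)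
    have hz : z ∈ AddSubmonoid.closure ({x, y, z} : Set ℕ) :=
      AddSubmonoid.subset_closure (by simp)
    refine add_mem (add_mem ?_ ?_) ?_
    · simpa [smul_eq_mul, mul_comm] using nsmul_mem hx a
    · simpa [smul_eq_mul, mul_comm] using nsmul_mem hy b
    · simpa [smul_eq_mul, mul_comm] using nsmul_mem hz c

private lemma mem_iff_key (s n : ℕ) (hs : 0 < s) :
    (∃ a b c, n = 2 * s * a + 3 * s * b + (3 * s + 1) * c) ↔
      3 * (n % s) ≤ n / s ∧ n / s ≠ 3 * (n % s) + 1 := by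
  constructor
  · rintro ⟨a, b, c, rfl⟩
    obtain ⟨d, e, he, hc⟩ : ∃ d e, e < s ∧ c = s * d + e :=
      ⟨c / s, c % s, Nat.mod_lt _ hs, (Nat.div_add_mod c s).symm⟩
    obtain ⟨P, hP1, hP2⟩ : ∃ P, s * d = P ∧ (P = 0 ∨ 1 ≤ P) := ⟨s * d, rfl, by omega⟩
    have hn : 2 * s * a + 3 * s * b + (3 * s + 1) * c
        = s * (2 * a + 3 * b + 3 * P + d + 3 * e) + e := by
      rw [hc, ← hP1]; ring
    have hmod : (2 * s * a + 3 * s * b + (3 * s + 1) * c) % s = e := by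
      rw [hn, Nat.mul_add_mod, Nat.mod_eq_of_lt he]
    have hdiv : (2 * s * a + 3 * s * b + (3 * s + 1) * c) / s
        = 2 * a + 3 * b + 3 * P + d + 3 * e := by
      rw [hn, Nat.mul_add_div hs, Nat.div_eq_of_lt he]
      exact Nat.add_zero _
    rw [hmod, hdiv]
    have hPd : d = 0 → P = 0 := by rintro rfl; omega
    constructor
    · omega
    · intro hcon
      have h1 : 2 * a + 3 * b + 3 * P + d = 1 := by omega
      -- if d = 0 then P = 0, so 2a+3b = 1 impossible; if d ≥ 1 then P ≥ 1 so ≥ 4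
      rcases Nat.eq_zero_or_pos d with hd | hd
      · have := hPd hd; omega
      · have : 1 ≤ P := by
          rcases hP2 with h | h
          · exfalso; have : s * d ≠ 0 := Nat.mul_ne_zero (by omega) (by omega); omega
          · exact h
        omega
  · rintro ⟨h1, h2⟩
    obtain ⟨k, r, hn, h1', h2'⟩ : ∃ k r, n = s * k + r ∧ 3 * r ≤ k ∧ k ≠ 3 * r + 1 :=
      ⟨n / s, n % s, (Nat.div_add_mod n s).symm, h1, h2⟩
    rcases Nat.even_or_odd (k - 3 * r) with ⟨v, hv⟩ | ⟨v, hv⟩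
    · have hk : k = 3 * r + (v + v) := by omega
      exact ⟨v, 0, r, by rw [hn, hk]; ring⟩
    · have hv1 : 1 ≤ v := by omega
      have hk : k = 3 * r + (2 * (v - 1) + 3) := by omega
      exact ⟨v - 1, 1, r, by rw [hn, hk]; ring⟩

private lemma sum_aux (m : ℕ) :
    2 * (∑ r ∈ Finset.range m, (3 * r + 1)) + m = 3 * m * m := by
  induction m with
  | zero => simp
  | succ m ih =>
    rw [Finset.sum_range_succ]
    have h : 3 * (m + 1) * (m + 1) = 3 * m * m + 6 * m + 3 := by ring
    linarith

theorem stmt_8 (t : ℕ) (ht : 1 ≤ t) (q : ℕ) (hq : q = 3 ^ t) :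
    {n : ℕ | n ∉ AddSubmonoid.closure ({2 * q / 3, q, q + 1} : Set ℕ)}.Finite ∧
    {n : ℕ | n ∉ AddSubmonoid.closure ({2 * q / 3, q, q + 1} : Set ℕ)}.ncard
      = q * (q - 1) / 6 := by
  obtain ⟨s, hs1, hq3⟩ : ∃ s, 1 ≤ s ∧ q = 3 * s := by
    refine ⟨3 ^ (t - 1), Nat.one_le_pow _ _ (by norm_num), ?_⟩
    have htt : t = (t - 1) + 1 := by omega
    rw [hq]
    conv_lhs => rw [htt]
    rw [pow_succ, mul_comm]
  have hs : 0 < s := hs1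
  have hgen : 2 * q / 3 = 2 * s := by omega
  have hq1 : q + 1 = 3 * s + 1 := by omega
  rw [hgen, hq3]
  -- the finset of gaps
  set F : Finset ℕ := (Finset.range s).biUnion
    (fun r => (Finset.range (3 * r)).image (fun k => s * k + r) ∪ {s * (3 * r + 1) + r})
    with hF
  have hmemF : ∀ n, n ∈ F ↔
      ∃ r, r < s ∧ ((∃ k, k < 3 * r ∧ s * k + r = n) ∨ n = s * (3 * r + 1) + r) := by
    intro n
    simp [hF, Finset.mem_biUnion, Finset.mem_union, Finset.mem_image, Finset.mem_range]
    exact ⟨fun ⟨a, ha, h⟩ => ⟨a, ha, h.symm⟩, fun ⟨a, ha, h⟩ => ⟨a, ha, h.symm⟩⟩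
  have hset : {n : ℕ | n ∉ AddSubmonoid.closure ({2 * s, 3 * s, 3 * s + 1} : Set ℕ)}
      = (F : Set ℕ) := by
    ext n
    simp only [Set.mem_setOf_eq, Finset.coe_sort_coe, Finset.mem_coe]
    rw [hmemF, closure_triple, mem_iff_key s n hs]
    constructor
    · intro h
      have hdm : s * (n / s) + n % s = n := Nat.div_add_mod n s
      have hr : n % s < s := Nat.mod_lt n hs
      by_cases h1 : n / s < 3 * (n % s)
      · exact ⟨n % s, hr, Or.inl ⟨n / s, h1, hdm⟩⟩
      · have hle : 3 * (n % s) ≤ n / s := Nat.le_of_not_lt h1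
        have h2 : n / s = 3 * (n % s) + 1 := by
          by_contra hc
          exact h ⟨hle, hc⟩
        exact ⟨n % s, hr, Or.inr (by rw [← h2]; exact hdm.symm)⟩
    · rintro ⟨r, hr, ⟨k, hk, rfl⟩ | rfl⟩
      · have hmod : (s * k + r) % s = r := by rw [Nat.mul_add_mod, Nat.mod_eq_of_lt hr]
        have hdiv : (s * k + r) / s = k := by
          rw [Nat.mul_add_div hs, Nat.div_eq_of_lt hr]
          exact Nat.add_zero _
        rw [hmod, hdiv]; omega
      · have hmod : (s * (3 * r + 1) + r) % s = r := by
          rw [Nat.mul_add_mod, Nat.mod_eq_of_lt hr]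
        have hdiv : (s * (3 * r + 1) + r) / s = 3 * r + 1 := by
          rw [Nat.mul_add_div hs, Nat.div_eq_of_lt hr]
        rw [hmod, hdiv]; omega
  rw [hset]
  refine ⟨F.finite_toSet, ?_⟩
  rw [Set.ncard_coe_finset]
  -- compute the cardinality of F
  have hbucketmod : ∀ r, r < s → ∀ n ∈
      (Finset.range (3 * r)).image (fun k => s * k + r) ∪ {s * (3 * r + 1) + r},
      n % s = r := by
    intro r hr n hn
    simp only [Finset.mem_union, Finset.mem_image, Finset.mem_range,
      Finset.mem_singleton] at hn
    rcases hn with ⟨k, _, rfl⟩ | rfl <;>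
      rw [Nat.mul_add_mod, Nat.mod_eq_of_lt hr]
  have hcard : F.card = ∑ r ∈ Finset.range s, (3 * r + 1) := by
    rw [hF, Finset.card_biUnion]
    · refine Finset.sum_congr rfl ?_
      intro r hr
      rw [Finset.card_union_of_disjoint, Finset.card_singleton,
        Finset.card_image_of_injective, Finset.card_range]
      · intro x y hxy
        exact Nat.eq_of_mul_eq_mul_left hs (Nat.add_right_cancel hxy)
      · rw [Finset.disjoint_singleton_right]
        simp only [Finset.mem_image, Finset.mem_range, not_exists]
        intro k hk
        obtain ⟨hk1, hk2⟩ := hk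
        have : k = 3 * r + 1 := Nat.eq_of_mul_eq_mul_left hs (Nat.add_right_cancel hk2)
        omega
    · intro r1 h1 r2 h2 hne
      rw [Function.onFun, Finset.disjoint_left]
      intro n hn1 hn2
      have e1 := hbucketmod r1 (Finset.mem_range.mp (Finset.mem_coe.mp h1)) n hn1
      have e2 := hbucketmod r2 (Finset.mem_range.mp (Finset.mem_coe.mp h2)) n hn2
      exact hne (by omega)
  rw [hcard]
  have e1 := sum_aux s
  have e4 : 6 * (∑ r ∈ Finset.range s, (3 * r + 1)) + 3 * s = 9 * (s * s) := by linarith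
  have hE : 3 * s * (3 * s - 1) = 6 * (∑ r ∈ Finset.range s, (3 * r + 1)) := by
    obtain ⟨u, hu⟩ : ∃ u, 3 * s = u + 1 := ⟨3 * s - 1, by omega⟩
    have hq1' : 3 * s - 1 = u := by omega
    have h5 : 3 * s * u + 3 * s = 9 * (s * s) := by
      calc 3 * s * u + 3 * s = 3 * s * (u + 1) := by ring
        _ = 3 * s * (3 * s) := by rw [hu]
        _ = 9 * (s * s) := by ring
    have h6 : 3 * s * (3 * s - 1) = 3 * s * u := by rw [hq1']
    linarith
  rw [hE, Nat.mul_div_cancel_left _ (by norm_num : 0 < 6)]
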